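/- Let d < p with p prime, let i < n, and let λ ∈ ℤⁿ. Define 𝔜 = {(t,h) ∈ (i..n] × [1..d] : t − i + λ_i − λ_t − h ≡ 0 mod p} and 𝔠 = {s ∈ (i..n) : s − i + λ_i − λ_s ≡ 0 mod p}. Then 𝔜 contains at most one point in each column {t} × ℤ; consequently, for any subset Δ ⊆ 𝔜 with pairwise <̇-incomparable points, there exists a strictly decreasing injection Δ → 𝔠 × {0} if and only if there exists a weakly decreasing injection from the multiset-free set π₁(Δ) − 1 = {t − 1 : (t,h) ∈ Δ} to 𝔠 (an injection σ with σ(s) ≤ s for all s). -/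

import Mathlib

/-- For `d < p`, the set `𝔜 = 𝔜_d^λ(i,n)` has at most one point in each
column; consequently, for any subset `Δ ⊆ 𝔜` with pairwise incomparable
points, a strictly decreasing injection `Δ → 𝔠 × {0}` exists iff a weakly
decreasing injection `{t − 1 : (t,h) ∈ Δ} → 𝔠` exists. -/
theorem stmt_18 (p : ℕ) (hp : p.Prime) (d : ℕ) (hd : d < p)
    (i n : ℤ) (hin : i < n) (lam : ℤ → ℤ)
    (Y : Set (ℤ × ℤ))
    (hY : Y = {x : ℤ × ℤ | i < x.1 ∧ x.1 ≤ n ∧ 1 ≤ x.2 ∧ x.2 ≤ (d : ℤ) ∧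
      (p : ℤ) ∣ (x.1 - i + lam i - lam x.1 - x.2)})
    (C : Set ℤ)
    (hC : C = {s : ℤ | i < s ∧ s < n ∧ (p : ℤ) ∣ (s - i + lam i - lam s)}) :
    (∀ t h h' : ℤ, (t, h) ∈ Y → (t, h') ∈ Y → h = h') ∧
    (∀ Δ ⊆ Y, (∀ x ∈ Δ, ∀ y ∈ Δ, ¬(x.1 < y.1 ∧ x.2 < y.2)) →
      ((∃ φ : ℤ × ℤ → ℤ × ℤ,
          Set.MapsTo φ Δ {q : ℤ × ℤ | q.1 ∈ C ∧ q.2 = 0} ∧ Set.InjOn φ Δ ∧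
          ∀ x ∈ Δ, (φ x).1 < x.1 ∧ (φ x).2 < x.2) ↔
        (∃ σ : ℤ → ℤ,
          Set.MapsTo σ {s : ℤ | ∃ x ∈ Δ, s = x.1 - 1} C ∧
          Set.InjOn σ {s : ℤ | ∃ x ∈ Δ, s = x.1 - 1} ∧
          ∀ s ∈ {s : ℤ | ∃ x ∈ Δ, s = x.1 - 1}, σ s ≤ s))) := by
  subst hY hC
  have col : ∀ t h h' : ℤ,
      (t, h) ∈ {x : ℤ × ℤ | i < x.1 ∧ x.1 ≤ n ∧ 1 ≤ x.2 ∧ x.2 ≤ (d : ℤ) ∧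
        (p : ℤ) ∣ (x.1 - i + lam i - lam x.1 - x.2)} →
      (t, h') ∈ {x : ℤ × ℤ | i < x.1 ∧ x.1 ≤ n ∧ 1 ≤ x.2 ∧ x.2 ≤ (d : ℤ) ∧
        (p : ℤ) ∣ (x.1 - i + lam i - lam x.1 - x.2)} → h = h' := by
    intro t h h' hm hm'
    obtain ⟨_, _, h1, h2, hdvd⟩ := hm
    obtain ⟨_, _, h1', h2', hdvd'⟩ := hm'
    have hdd : (p : ℤ) ∣ (h - h') := by
      have := dvd_sub hdvd' hdvd
      simpa using this
    have hz : h - h' = 0 := by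
      refine Int.eq_zero_of_abs_lt_dvd hdd ?_
      have hdp : (d : ℤ) < (p : ℤ) := by exact_mod_cast hd
      simp only at h1 h2 h1' h2'
      rw [abs_lt]; omega
    omega
  refine ⟨col, ?_⟩
  intro Δ hΔY _hinc
  have uniq : ∀ x ∈ Δ, ∀ y ∈ Δ, x.1 = y.1 → x = y := by
    intro x hx y hy hxy
    have := col x.1 x.2 y.2 (hΔY hx) (by rw [hxy]; exact hΔY hy)
    exact Prod.ext hxy this
  constructor
  · rintro ⟨φ, hmaps, hinj, hdec⟩
    classical
    refine ⟨fun s => if h : ∃ x ∈ Δ, s = x.1 - 1 then (φ h.choose).1 else s, ?_, ?_, ?_⟩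
    · intro s hs
      simp only [Set.mem_setOf_eq] at hs
      simp only [dif_pos hs]
      exact (hmaps hs.choose_spec.1).1
    · intro s hs s' hs' heq
      simp only [Set.mem_setOf_eq] at hs hs'
      simp only [dif_pos hs, dif_pos hs'] at heq
      have hx := hs.choose_spec
      have hx' := hs'.choose_spec
      have h2 : (φ hs.choose).2 = (φ hs'.choose).2 := by
        rw [(hmaps hx.1).2, (hmaps hx'.1).2]
      have : hs.choose = hs'.choose := hinj hx.1 hx'.1 (Prod.ext heq h2)
      rw [hx.2, hx'.2, this]
    · intro s hs
      simp only [Set.mem_setOf_eq] at hs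
      simp only [dif_pos hs]
      have hx := hs.choose_spec
      have := (hdec hs.choose hx.1).1
      omega
  · rintro ⟨σ, hmaps, hinj, hdec⟩
    refine ⟨fun x => (σ (x.1 - 1), 0), ?_, ?_, ?_⟩
    · intro x hx
      exact ⟨hmaps ⟨x, hx, rfl⟩, rfl⟩
    · intro x hx y hy heq
      have h1 : σ (x.1 - 1) = σ (y.1 - 1) := congrArg Prod.fst heq
      have := hinj ⟨x, hx, rfl⟩ ⟨y, hy, rfl⟩ h1
      exact uniq x hx y hy (by omega)
    · intro x hx
      have h1 := hdec (x.1 - 1) ⟨x, hx, rfl⟩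
      have h2 := (hΔY hx).2.2.1
      exact ⟨by simp only; omega, by have h3 : (1 : ℤ) ≤ x.2 := h2; simp only; omega⟩
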